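/- Let U_{n,λ} and V_n be the n×n matrices defined on the standard basis e₁,…,e_n by U_{n,λ}e_j = λ^{j−1}e_j and V_n e_j = e_{j+1} (indices mod n, i.e., V_n e_n = e₁), where λ ∈ ℂ with |λ| = 1. Then U_{n,λ} and V_n are unitary and ‖U_{n,λ}V_n − λ V_n U_{n,λ}‖ = |λⁿ − 1|. -/

import Mathlib

open scoped Matrix.Norms.L2Operator
open Matrix

section Aux
variable {n : ℕ}

lemma aux_conjT_stdBasis (i j : Fin n) :
    (Matrix.single i j (1 : ℂ))ᴴ = Matrix.single j i (1 : ℂ) := by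
  ext a b
  simp only [Matrix.conjTranspose_apply, Matrix.single, Matrix.of_apply]
  split_ifs with h1 h2 h3 <;> simp_all

lemma aux_norm_stdBasis_one (i j : Fin n) :
    ‖Matrix.single i j (1 : ℂ)‖ = 1 := by
  have hP : (Matrix.single i j (1 : ℂ))ᴴ * Matrix.single i j (1 : ℂ)
      = Matrix.single j j (1 : ℂ) := by
    rw [aux_conjT_stdBasis, Matrix.single_mul_single_same, one_mul]
  have hPne : Matrix.single j j (1 : ℂ) ≠ 0 := by
    intro h
    have := congrFun (congrFun h j) j
    simp [Matrix.single] at this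
  have hPP : (Matrix.single j j (1 : ℂ))ᴴ * Matrix.single j j (1 : ℂ)
      = Matrix.single j j (1 : ℂ) := by
    rw [aux_conjT_stdBasis, Matrix.single_mul_single_same, one_mul]
  have h1 : ‖Matrix.single j j (1 : ℂ)‖ * ‖Matrix.single j j (1 : ℂ)‖
      = ‖Matrix.single j j (1 : ℂ)‖ := by
    conv_rhs => rw [← hPP, ← Matrix.star_eq_conjTranspose, CStarRing.norm_star_mul_self]
  have hPnorm : ‖Matrix.single j j (1 : ℂ)‖ = 1 := by
    have h0 : ‖Matrix.single j j (1 : ℂ)‖ ≠ 0 := norm_ne_zero_iff.mpr hPne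
    field_simp at h1
    exact h1
  have h2 : ‖Matrix.single i j (1 : ℂ)‖ * ‖Matrix.single i j (1 : ℂ)‖ = 1 := by
    rw [← CStarRing.norm_star_mul_self, Matrix.star_eq_conjTranspose, hP, hPnorm]
  nlinarith [norm_nonneg (Matrix.single i j (1 : ℂ))]

end Aux

/-- The clock matrix `U_{n,λ}` and shift matrix `V_n` are unitary and
`‖U V - λ V U‖ = |λⁿ - 1|` in the operator norm, where `|λ| = 1`. -/
theorem clock_shift_commutator_norm
    (n : ℕ) (hn : 0 < n) (lam : ℂ) (hlam : ‖lam‖ = 1)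
    (U V : Matrix (Fin n) (Fin n) ℂ)
    (hU : U = Matrix.diagonal fun j : Fin n => lam ^ (j : ℕ))
    (hV : V = Matrix.of fun i j : Fin n => if (i : ℕ) = ((j : ℕ) + 1) % n then (1 : ℂ) else 0) :
    U ∈ Matrix.unitaryGroup (Fin n) ℂ ∧
    V ∈ Matrix.unitaryGroup (Fin n) ℂ ∧
    ‖U * V - lam • (V * U)‖ = ‖lam ^ n - 1‖ := by
  haveI : NeZero n := ⟨hn.ne'⟩
  have hlam' : ∀ k : ℕ, (starRingEnd ℂ) (lam ^ k) * lam ^ k = 1 := by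
    intro k
    rw [← Complex.normSq_eq_conj_mul_self]
    norm_cast
    rw [Complex.normSq_eq_norm_sq]
    simp [norm_pow, hlam]
  -- U unitary
  have hUmem : U ∈ Matrix.unitaryGroup (Fin n) ℂ := by
    constructor
    · rw [hU, Matrix.star_eq_conjTranspose, Matrix.diagonal_conjTranspose,
        Matrix.diagonal_mul_diagonal]
      rw [show (1 : Matrix (Fin n) (Fin n) ℂ) = Matrix.diagonal fun _ => (1 : ℂ) from
        (Matrix.diagonal_one).symm]
      exact congrArg Matrix.diagonal (funext fun j => hlam' (j : ℕ))
    · rw [hU, Matrix.star_eq_conjTranspose, Matrix.diagonal_conjTranspose,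
        Matrix.diagonal_mul_diagonal]
      rw [show (1 : Matrix (Fin n) (Fin n) ℂ) = Matrix.diagonal fun _ => (1 : ℂ) from
        (Matrix.diagonal_one).symm]
      exact congrArg Matrix.diagonal (funext fun j => by
        rw [mul_comm]; exact hlam' (j : ℕ))
  -- V as a permutation matrix
  set σ : Equiv.Perm (Fin n) := Equiv.addRight (1 : Fin n) with hσ
  have hσval : ∀ j : Fin n, ((σ j : Fin n) : ℕ) = ((j : ℕ) + 1) % n := by
    intro j
    simp [hσ, Equiv.addRight, Fin.add_def]
  have hVperm : V = (σ.symm).toPEquiv.toMatrix := by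
    rw [hV]
    ext i j
    rw [PEquiv.toMatrix_apply, Equiv.toPEquiv_apply]
    simp only [Matrix.of_apply, Option.mem_def, Option.some.injEq]
    have hiff : (i : ℕ) = ((j : ℕ) + 1) % n ↔ σ.symm i = j := by
      rw [← hσval j]
      constructor
      · intro h
        have : i = σ j := Fin.ext h
        rw [this]; simp
      · intro h
        rw [← h]; simp
    by_cases h : (i : ℕ) = ((j : ℕ) + 1) % n
    · rw [if_pos h, if_pos (hiff.mp h)]
    · rw [if_neg h, if_neg (fun hh => h (hiff.mpr hh))]
  have hVH : Vᴴ = σ.toPEquiv.toMatrix := by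
    rw [hVperm]
    have hre : (σ.symm.toPEquiv.toMatrix : Matrix (Fin n) (Fin n) ℂ)ᴴ
        = (σ.symm.toPEquiv.toMatrix : Matrix (Fin n) (Fin n) ℂ)ᵀ := by
      ext a b
      rw [Matrix.conjTranspose_apply, Matrix.transpose_apply, PEquiv.toMatrix_apply]
      split <;> simp
    rw [hre, Equiv.toPEquiv_symm, PEquiv.toMatrix_symm, Matrix.transpose_transpose]
  have hVmem : V ∈ Matrix.unitaryGroup (Fin n) ℂ := by
    constructor
    · rw [Matrix.star_eq_conjTranspose, hVH, hVperm, ← PEquiv.toMatrix_trans,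
        ← Equiv.toPEquiv_trans, Equiv.self_trans_symm, Equiv.toPEquiv_refl,
        PEquiv.toMatrix_refl]
    · rw [Matrix.star_eq_conjTranspose, hVH, hVperm, ← PEquiv.toMatrix_trans,
        ← Equiv.toPEquiv_trans, Equiv.symm_trans_self, Equiv.toPEquiv_refl,
        PEquiv.toMatrix_refl]
  refine ⟨hUmem, hVmem, ?_⟩
  -- commutator
  have hlast : (n - 1) < n := Nat.sub_lt hn Nat.one_pos
  set j₀ : Fin n := ⟨n - 1, hlast⟩ with hj₀
  set i₀ : Fin n := ⟨0, hn⟩ with hi₀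
  have hpow : lam * lam ^ (n - 1) = lam ^ n := by
    rw [← pow_succ']
    congr 1
    omega
  have hcomm : U * V - lam • (V * U)
      = Matrix.single i₀ j₀ ((1 : ℂ) - lam ^ n) := by
    ext i j
    simp only [Matrix.sub_apply, Matrix.smul_apply, hU, hV,
      Matrix.diagonal_mul, Matrix.mul_diagonal, Matrix.of_apply, smul_eq_mul]
    by_cases hj : (j : ℕ) = n - 1
    · have hmod : ((j : ℕ) + 1) % n = 0 := by
        rw [hj, Nat.sub_add_cancel hn, Nat.mod_self]
      by_cases hi : (i : ℕ) = 0
      · have hcond : (i : ℕ) = ((j : ℕ) + 1) % n := by rw [hmod, hi]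
        rw [if_pos hcond]
        have hii : i = i₀ := Fin.ext hi
        have hjj : j = j₀ := Fin.ext hj
        rw [hii, hjj, Matrix.single_apply_same]
        show lam ^ (0 : ℕ) * 1 - lam * (1 * lam ^ (n - 1)) = 1 - lam ^ n
        rw [pow_zero, one_mul, one_mul, hpow]
      · have hcond : ¬ (i : ℕ) = ((j : ℕ) + 1) % n := by rw [hmod]; exact hi
        rw [if_neg hcond, Matrix.single_apply_of_ne]
        · ring
        · rintro ⟨h1, h2⟩
          apply hi
          rw [← h1]
    · have hjlt : (j : ℕ) + 1 < n := by
        have := j.isLt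
        omega
      have hmod : ((j : ℕ) + 1) % n = (j : ℕ) + 1 := Nat.mod_eq_of_lt hjlt
      rw [Matrix.single_apply_of_ne]
      swap
      · rintro ⟨h1, h2⟩
        apply hj
        rw [← h2]
      by_cases hi : (i : ℕ) = (j : ℕ) + 1
      · have hcond : (i : ℕ) = ((j : ℕ) + 1) % n := by rw [hmod]; exact hi
        rw [if_pos hcond, hi, pow_succ]
        ring
      · have hcond : ¬ (i : ℕ) = ((j : ℕ) + 1) % n := by rw [hmod]; exact hi
        rw [if_neg hcond]
        ring
  have hsmul : Matrix.single i₀ j₀ ((1 : ℂ) - lam ^ n)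
      = ((1 : ℂ) - lam ^ n) • Matrix.single i₀ j₀ (1 : ℂ) := by
    rw [Matrix.smul_single, smul_eq_mul, mul_one]
  rw [hcomm, hsmul, norm_smul, aux_norm_stdBasis_one, mul_one, norm_sub_rev]
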